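/- Let A be a finite-dimensional algebra over a field, let u : X → ⊕_{i=1}^r X_i^{n_i} be a left minimal almost split morphism with X, X₁, …, X_r indecomposable and pairwise nonisomorphic, with components u_{i,j} : X → X_i. Then for each i, the residue classes (ū_{i,1}, …, ū_{i,n_i}) in irr(X, X_i) = rad(X,X_i)/rad²(X,X_i) form a basis of irr(X, X_i) as a right vector space over the division ring κ_{X_i} = End_A(X_i)/rad(X_i,X_i). -/

import Mathlib

open CategoryTheory

universe v u

/-- A finitely generated module object is indecomposable: nontrivial and
its only idempotent endomorphisms are `0` and the identity. -/
def IsIndecO (A : Type u) [Ring A] (M : ModuleCat.{v} A) : Prop :=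
  Nontrivial M ∧ ∀ e : M ⟶ M, e ≫ e = e → e = 0 ∨ e = 𝟙 M

/-- `f` lies in the radical of the category of finitely generated modules. -/
def IsRad (A : Type u) [Ring A] {M N : ModuleCat.{v} A} (f : M ⟶ N) : Prop :=
  ∀ X : ModuleCat.{v} A, Module.Finite A X → IsIndecO A X →
    ∀ (u : X ⟶ M) (v : N ⟶ X), ¬ IsIso (u ≫ f ≫ v)

/-- `IsRadPow A n f` : `f` lies in the `n`-th power of the radical. -/
def IsRadPow (A : Type u) [Ring A] : ∀ (_ : ℕ) {M N : ModuleCat.{v} A}, (M ⟶ N) → Prop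
  | 0, _, _, _ => True
  | (n+1), M, N, f => ∃ (m : ℕ) (Z : Fin m → ModuleCat.{v} A)
      (h : ∀ i, M ⟶ Z i) (g : ∀ i, Z i ⟶ N),
      (∀ i, IsRad A (h i)) ∧ (∀ i, IsRadPow A n (g i)) ∧ f = ∑ i, h i ≫ g i
/-- `u : X ⟶ Y` is left minimal almost split. -/
def IsLeftMinimalAlmostSplit (A : Type u) [Ring A] {X Y : ModuleCat.{v} A}
    (u : X ⟶ Y) : Prop :=
  (¬ ∃ r : Y ⟶ X, u ≫ r = 𝟙 X) ∧
  (∀ (Z : ModuleCat.{v} A) (f : X ⟶ Z), (¬ ∃ r : Z ⟶ X, f ≫ r = 𝟙 X) →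
      ∃ g : Y ⟶ Z, u ≫ g = f) ∧
  (∀ h : Y ⟶ Y, u ≫ h = u → IsIso h)

section Helpers

variable {A : Type u} [Ring A]

/-- view an endo-hom as a `Module.End`. -/
def endOf {M : ModuleCat.{v} A} (f : M ⟶ M) : Module.End A ↑M := f.hom

lemma my_id_ne_zero {M : ModuleCat.{v} A} (h : Nontrivial M) : (𝟙 M : M ⟶ M) ≠ 0 := by
  obtain ⟨x, y, hxy⟩ := h
  intro h0
  apply hxy
  have hx : (𝟙 M : M ⟶ M) x = (0 : M ⟶ M) x := by rw [h0]
  have hy : (𝟙 M : M ⟶ M) y = (0 : M ⟶ M) y := by rw [h0]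
  simp only [ModuleCat.id_apply] at hx hy
  rw [hx, hy]
  rfl

lemma my_not_isIso_zero {M N : ModuleCat.{v} A} (h : Nontrivial M) :
    ¬ IsIso (0 : M ⟶ N) := by
  intro hiso
  apply my_id_ne_zero h
  rw [← IsIso.hom_inv_id (0 : M ⟶ N), Limits.zero_comp]

lemma my_isIso_of_comp_comp {M N Z : ModuleCat.{v} A}
    (hM : IsIndecO A M) (hN : IsIndecO A N) (hZ : Nontrivial Z)
    (a : Z ⟶ M) (g : M ⟶ N) (b : N ⟶ Z)
    (hiso : IsIso (a ≫ g ≫ b)) : IsIso g := by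
  set φ := a ≫ g ≫ b with hφ
  set t : M ⟶ Z := g ≫ b ≫ inv φ with ht
  have hat : a ≫ t = 𝟙 Z := by
    rw [ht, ← Category.assoc, ← Category.assoc, Category.assoc a g b, ← hφ, IsIso.hom_inv_id]
  have he : (t ≫ a) ≫ (t ≫ a) = t ≫ a := by
    rw [Category.assoc, ← Category.assoc a t, hat, Category.id_comp]
  rcases hM.2 (t ≫ a) he with h0 | h1
  · exfalso
    apply my_id_ne_zero hZ
    have : (𝟙 Z : Z ⟶ Z) = a ≫ (t ≫ a) ≫ t :=
      calc (𝟙 Z : Z ⟶ Z) = (a ≫ t) ≫ (a ≫ t) := by rw [hat, Category.comp_id]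
        _ = a ≫ (t ≫ a) ≫ t := by simp only [Category.assoc]
    rw [this, h0, Limits.zero_comp, Limits.comp_zero]
  · set ρ : N ⟶ M := b ≫ inv φ ≫ a with hρ
    have hgρ : g ≫ ρ = 𝟙 M := by
      rw [hρ, ← h1, ht]
      simp only [Category.assoc]
    have he' : (ρ ≫ g) ≫ (ρ ≫ g) = ρ ≫ g := by
      rw [Category.assoc, ← Category.assoc g ρ, hgρ, Category.id_comp]
    rcases hN.2 (ρ ≫ g) he' with h0' | h1'
    · exfalso
      apply my_id_ne_zero hM.1
      have : (𝟙 M : M ⟶ M) = g ≫ (ρ ≫ g) ≫ ρ :=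
        calc (𝟙 M : M ⟶ M) = (g ≫ ρ) ≫ (g ≫ ρ) := by rw [hgρ, Category.comp_id]
          _ = g ≫ (ρ ≫ g) ≫ ρ := by simp only [Category.assoc]
      rw [this, h0', Limits.zero_comp, Limits.comp_zero]
    · exact ⟨ρ, hgρ, h1'⟩

lemma my_isRad_of_not_isIso {M N : ModuleCat.{v} A}
    (hM : IsIndecO A M) (hN : IsIndecO A N) (g : M ⟶ N) (hg : ¬ IsIso g) :
    IsRad A g :=
  fun _Z _hfg hZ a b hiso => hg (my_isIso_of_comp_comp hM hN hZ.1 a g b hiso)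

lemma my_isRad_zero {M N : ModuleCat.{v} A} : IsRad A (0 : M ⟶ N) := by
  intro Z _ hZ a b hiso
  rw [Limits.zero_comp, Limits.comp_zero] at hiso
  exact my_not_isIso_zero hZ.1 hiso

lemma my_isRadPow_one_of_isRad {M N : ModuleCat.{v} A} {f : M ⟶ N}
    (hf : IsRad A f) : IsRadPow A 1 f :=
  ⟨1, fun _ => N, fun _ => f, fun _ => 𝟙 N, fun _ => hf, fun _ => trivial, by simp [IsRadPow]⟩

lemma my_isIso_iff_isUnit {M : ModuleCat.{v} A} (f : M ⟶ M) :
    IsIso f ↔ IsUnit (endOf f) := by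
  constructor
  · intro h
    exact ⟨⟨endOf f, endOf (inv f), congrArg ModuleCat.Hom.hom (IsIso.inv_hom_id f),
      congrArg ModuleCat.Hom.hom (IsIso.hom_inv_id f)⟩, rfl⟩
  · intro h
    obtain ⟨w, hw⟩ := h
    have h1 : (↑w⁻¹ : Module.End A ↑M) * ↑w = 1 := w.inv_mul
    have h2 : (↑w : Module.End A ↑M) * ↑w⁻¹ = 1 := w.mul_inv
    rw [hw] at h1 h2
    exact ⟨ModuleCat.ofHom (↑w⁻¹ : Module.End A ↑M), ModuleCat.hom_ext h1, ModuleCat.hom_ext h2⟩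

end Helpers

section Fitting

variable (k : Type u) [Field k] (A : Type u) [Ring A] [Algebra k A] [FiniteDimensional k A]

include k

lemma my_artinian {M : ModuleCat.{v} A} (hfg : Module.Finite A M) : IsArtinian A ↑M := by
  haveI : IsArtinianRing A := isArtinian_of_tower k inferInstance
  haveI := hfg
  infer_instance

lemma my_noetherian {M : ModuleCat.{v} A} (hfg : Module.Finite A M) : IsNoetherian A ↑M := by
  haveI : IsNoetherianRing A := isNoetherian_of_tower k inferInstance
  haveI := hfg
  infer_instance

lemma my_nilpotent_of_not_isIso {M : ModuleCat.{v} A} (hfg : Module.Finite A M)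
    (hM : IsIndecO A M) (f : M ⟶ M) (hf : ¬ IsIso f) : IsNilpotent (endOf f) := by
  haveI := my_artinian k A hfg
  haveI := my_noetherian k A hfg
  obtain ⟨n, hn, hn1⟩ :=
    ((LinearMap.eventually_isCompl_ker_pow_range_pow (endOf f)).and
      (Filter.eventually_ge_atTop 1)).exists
  set F := endOf f ^ n with hF
  set p := LinearMap.range F
  set q := LinearMap.ker F
  have hc : IsCompl p q := hn.symm
  set e : M ⟶ M := ModuleCat.ofHom (p.subtype.comp (p.projectionOnto q hc) : ↑M →ₗ[A] ↑M) with he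
  have hee : e ≫ e = e := by
    refine ModuleCat.hom_ext (LinearMap.ext fun x => ?_)
    show e (e x) = e x
    have hmem : e x ∈ p := by
      exact (p.projectionOnto q hc x).2
    have : e (e x) = ↑(p.projectionOnto q hc (↑(⟨e x, hmem⟩ : p))) := rfl
    rw [this, Submodule.projectionOnto_apply_left hc]
  rcases hM.2 e hee with h0 | h1
  · -- range F = ⊥, so F = 0
    refine ⟨n, ?_⟩
    have hrange : p = ⊥ := by
      rw [Submodule.eq_bot_iff]
      intro y hy
      have : e y = ↑(p.projectionOnto q hc (↑(⟨y, hy⟩ : p))) := rfl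
      have h2 := Submodule.projectionOnto_apply_left hc (⟨y, hy⟩ : p)
      rw [h2] at this
      rw [h0] at this
      exact ((by exact this.symm : y = (0 : M ⟶ M) y)).trans rfl
    exact LinearMap.range_eq_bot.mp hrange
  · -- ker F = ⊥ hence F bijective hence f iso: contradiction
    exfalso
    apply hf
    have hker : q = ⊥ := by
      rw [Submodule.eq_bot_iff]
      intro y hy
      have h2 : e y = 0 := by
        have := Submodule.projectionOnto_apply_right hc (⟨y, hy⟩ : q)
        show ↑(p.projectionOnto q hc y) = (0 : ↑M)
        rw [this]
        rfl
      rw [h1] at h2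
      exact h2
    have hrange : p = ⊤ := by
      have hcd := hn.codisjoint
      rw [hker] at hcd
      have := codisjoint_iff.mp hcd
      rwa [bot_sup_eq] at this
    have hFbij : Function.Bijective F :=
      ⟨LinearMap.ker_eq_bot.mp hker, LinearMap.range_eq_top.mp hrange⟩
    obtain ⟨n', rfl⟩ : ∃ n', n = n' + 1 := ⟨n - 1, by omega⟩
    have hinj : Function.Injective (endOf f) := by
      intro x y hxy
      apply hFbij.1
      show (endOf f ^ (n' + 1)) x = (endOf f ^ (n' + 1)) y
      rw [pow_succ]
      show (endOf f ^ n') (endOf f x) = (endOf f ^ n') (endOf f y)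
      rw [hxy]
    have hsurj : Function.Surjective (endOf f) := by
      intro y
      obtain ⟨z, hz⟩ := hFbij.2 y
      refine ⟨(endOf f ^ n') z, ?_⟩
      rw [← hz]
      show (endOf f * endOf f ^ n') z = (endOf f ^ (n' + 1)) z
      rw [pow_succ']
    rw [my_isIso_iff_isUnit]
    rw [Module.End.isUnit_iff]
    exact ⟨hinj, hsurj⟩

lemma my_not_isIso_add {M : ModuleCat.{v} A} (hfg : Module.Finite A M)
    (hM : IsIndecO A M) (x y : M ⟶ M) (hx : ¬ IsIso x) (hy : ¬ IsIso y) :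
    ¬ IsIso (x + y) := by
  intro hiso
  rw [my_isIso_iff_isUnit] at hiso
  obtain ⟨w, hw⟩ := hiso
  have hsum : (↑w⁻¹ : Module.End A ↑M) * endOf x + (↑w⁻¹ : Module.End A ↑M) * endOf y = 1 := by
    rw [← mul_add]
    have : endOf x + endOf y = endOf (x + y) := rfl
    rw [this, ← hw, w.inv_mul]
  set nn : M ⟶ M := ModuleCat.ofHom ((↑w⁻¹ : Module.End A ↑M) * endOf x : ↑M →ₗ[A] ↑M) with hnn
  have hnnotiso : ¬ IsIso nn := by
    intro hniso
    apply hx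
    rw [my_isIso_iff_isUnit] at hniso ⊢
    have : endOf x = ↑w * endOf nn := by
      rw [hnn]
      show endOf x = ↑w * ((↑w⁻¹ : Module.End A ↑M) * endOf x)
      rw [← mul_assoc, w.mul_inv, one_mul]
    rw [this]
    exact (w.isUnit).mul hniso
  have hnil : IsNilpotent (endOf nn) := my_nilpotent_of_not_isIso k A hfg hM nn hnnotiso
  have hyunit : IsUnit ((↑w⁻¹ : Module.End A ↑M) * endOf y) := by
    have : (↑w⁻¹ : Module.End A ↑M) * endOf y = 1 - endOf nn := by
      rw [eq_sub_iff_add_eq, hnn]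
      show (↑w⁻¹ : Module.End A ↑M) * endOf y + (↑w⁻¹ : Module.End A ↑M) * endOf x = 1
      rw [add_comm]
      exact hsum
    rw [this]
    exact hnil.isUnit_one_sub
  apply hy
  rw [my_isIso_iff_isUnit]
  have : endOf y = ↑w * ((↑w⁻¹ : Module.End A ↑M) * endOf y) := by
    rw [← mul_assoc, w.mul_inv, one_mul]
  rw [this]
  exact (w.isUnit).mul hyunit

lemma my_not_isIso_sum {M : ModuleCat.{v} A} (hfg : Module.Finite A M)
    (hM : IsIndecO A M) {ι : Type*} [DecidableEq ι] (s : Finset ι) (f : ι → (M ⟶ M))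
    (h : ∀ i ∈ s, ¬ IsIso (f i)) : ¬ IsIso (∑ i ∈ s, f i) := by
  revert h
  induction s using Finset.induction_on with
  | empty =>
    intro _
    rw [Finset.sum_empty]
    exact my_not_isIso_zero hM.1
  | @insert a s' hx ih =>
    intro h
    rw [Finset.sum_insert hx]
    exact my_not_isIso_add k A hfg hM _ _ (h a (Finset.mem_insert_self a s'))
      (ih fun i hi => h i (Finset.mem_insert_of_mem hi))

end Fitting

/-- The components `u_{i,j} : X ⟶ Xᵢ` of a left minimal almost split morphism
`u : X ⟶ ⊕ᵢ Xᵢ^{nᵢ}` (with `X, X₁, …, X_r` indecomposable, pairwise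
nonisomorphic) induce, for each `i`, a basis of
`irr(X,Xᵢ) = rad(X,Xᵢ)/rad²(X,Xᵢ)` as a right vector space over
`κ_{Xᵢ} = End(Xᵢ)/rad(Xᵢ,Xᵢ)` : every radical morphism `X ⟶ Xᵢ` is, modulo
`rad²`, a right `End(Xᵢ)`-combination of the `u_{i,j}` (spanning), and a
combination lies in `rad²` only when all its coefficients are non-invertible,
i.e. vanish in `κ_{Xᵢ}` (independence). -/
theorem stmt17 (k : Type u) [Field k] (A : Type u) [Ring A] [Algebra k A]
    [FiniteDimensional k A]
    (r : ℕ) (X : ModuleCat.{v} A) (Xi : Fin r → ModuleCat.{v} A) (ni : Fin r → ℕ)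
    (hXfg : Module.Finite A X) (hXifg : ∀ i, Module.Finite A (Xi i))
    (hX : IsIndecO A X) (hXi : ∀ i, IsIndecO A (Xi i))
    (hpair : ∀ i j, i ≠ j → ¬ Nonempty (Xi i ≅ Xi j))
    (hXXi : ∀ i, ¬ Nonempty (X ≅ Xi i))
    (u : X ⟶ ModuleCat.of A (∀ p : Σ i : Fin r, Fin (ni i), ↥(Xi p.1)))
    (hu : IsLeftMinimalAlmostSplit A u)
    (uc : ∀ i : Fin r, Fin (ni i) → (X ⟶ Xi i))
    (huc : ∀ (i : Fin r) (j : Fin (ni i)) (x : X),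
      uc i j x = u x ⟨i, j⟩) :
    ∀ i : Fin r,
      (∀ f : X ⟶ Xi i, IsRad A f →
        ∃ c : Fin (ni i) → (Xi i ⟶ Xi i),
          IsRadPow A 2 (f - ∑ j, uc i j ≫ c j)) ∧
      (∀ c : Fin (ni i) → (Xi i ⟶ Xi i),
        IsRadPow A 2 (∑ j, uc i j ≫ c j) → ∀ j, ¬ IsIso (c j)) := by
  classical
  classical
  revert u hu huc
  -- structural morphisms of the biproduct
  set Y : ModuleCat.{v} A := ModuleCat.of A (∀ p : Σ i : Fin r, Fin (ni i), ↥(Xi p.1)) with hYdef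
  intro u hu huc
  set σ : ∀ p : Σ i : Fin r, Fin (ni i), (Xi p.1 ⟶ Y) := fun p =>
    ModuleCat.ofHom (LinearMap.single A (fun q : Σ i : Fin r, Fin (ni i) => ↥(Xi q.1)) p : _ →ₗ[A] _)
    with hσdef
  set π : ∀ p : Σ i : Fin r, Fin (ni i), (Y ⟶ Xi p.1) := fun p =>
    ModuleCat.ofHom (LinearMap.proj p : (∀ q : Σ i : Fin r, Fin (ni i), ↥(Xi q.1)) →ₗ[A] ↥(Xi p.1))
    with hπdef
  have hσπ_same : ∀ p, σ p ≫ π p = 𝟙 (Xi p.1) := by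
    intro p
    refine ModuleCat.hom_ext (LinearMap.ext fun x => ?_)
    exact Pi.single_eq_same (M := fun q : Σ i' : Fin r, Fin (ni i') => ↥(Xi q.1)) p x
  have hσπ_ne : ∀ p q, p ≠ q → σ p ≫ π q = (0 : Xi p.1 ⟶ Xi q.1) := by
    intro p q hpq
    refine ModuleCat.hom_ext (LinearMap.ext fun x => ?_)
    exact Pi.single_eq_of_ne (M := fun q' : Σ i' : Fin r, Fin (ni i') => ↥(Xi q'.1)) (Ne.symm hpq) x
  have hid' : (∑ p, π p ≫ σ p) = 𝟙 Y := by
    refine ModuleCat.hom_ext (LinearMap.ext fun x => ?_)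
    have h1 : (∑ p, π p ≫ σ p) x = ∑ p, (π p ≫ σ p) x := by
      show ModuleCat.Hom.hom (∑ p, π p ≫ σ p : Y ⟶ Y) x = ∑ p, ModuleCat.Hom.hom (π p ≫ σ p) x
      rw [ModuleCat.hom_sum]
      exact LinearMap.sum_apply _ _ x
    rw [h1]
    exact Finset.univ_sum_single (x : ∀ q : Σ i' : Fin r, Fin (ni i'), ↥(Xi q.1))
  have huσ : ∀ p : Σ i' : Fin r, Fin (ni i'), u ≫ π p = uc p.1 p.2 := by
    rintro ⟨a, b⟩
    refine ModuleCat.hom_ext (LinearMap.ext fun x => ?_)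
    exact (huc a b x).symm
  have hnoret : ∀ (T : ModuleCat.{v} A) (f' : X ⟶ T), IsRad A f' →
      ¬ ∃ rr : T ⟶ X, f' ≫ rr = 𝟙 X := by
    rintro T f' hf' ⟨rr, hrr⟩
    exact hf' X hXfg hX (𝟙 X) rr (by rw [Category.id_comp, hrr]; infer_instance)
  have hucrad : ∀ (a : Fin r) (b : Fin (ni a)), IsRad A (uc a b) := by
    intro a b
    refine my_isRad_of_not_isIso hX (hXi a) _ (fun hiso => hXXi a ⟨@asIso _ _ _ _ _ hiso⟩)
  intro i
  have hproj : ∀ (c : Fin (ni i) → (Xi i ⟶ Xi i)) (j : Fin (ni i)),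
      σ ⟨i, j⟩ ≫ (∑ j', π ⟨i, j'⟩ ≫ c j') = c j := by
    intro c j
    rw [Preadditive.comp_sum]
    rw [Finset.sum_eq_single j]
    · rw [← Category.assoc, hσπ_same ⟨i, j⟩, Category.id_comp]
    · intro j' _ hne
      have hne' : (⟨i, j⟩ : Σ i' : Fin r, Fin (ni i')) ≠ ⟨i, j'⟩ := by
        intro hh
        injection hh with h1 h2
        exact hne h2.symm
      rw [← Category.assoc, hσπ_ne ⟨i, j⟩ ⟨i, j'⟩ hne', Limits.zero_comp]
    · intro habs
      exact absurd (Finset.mem_univ j) habs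
  have hkey : ∀ (T : ModuleCat.{v} A) (vm : Y ⟶ T),
      u ≫ vm = ∑ p, uc p.1 p.2 ≫ (σ p ≫ vm) := by
    intro T vm
    calc u ≫ vm = u ≫ (∑ p, π p ≫ σ p) ≫ vm := by rw [hid', Category.id_comp]
      _ = ∑ p, u ≫ (π p ≫ σ p) ≫ vm := by
          rw [Preadditive.sum_comp, Preadditive.comp_sum]
      _ = ∑ p, uc p.1 p.2 ≫ (σ p ≫ vm) := by
          refine Finset.sum_congr rfl fun p _ => ?_
          rw [Category.assoc, ← Category.assoc u (π p) (σ p ≫ vm), huσ p]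
  constructor
  · -- spanning
    intro f hf
    obtain ⟨g, hg⟩ := hu.2.1 (Xi i) f (hnoret (Xi i) f hf)
    refine ⟨fun j => σ ⟨i, j⟩ ≫ g, ?_⟩
    set c : Fin (ni i) → (Xi i ⟶ Xi i) := fun j => σ ⟨i, j⟩ ≫ g with hcdef
    set D : Y ⟶ Xi i := g - ∑ j, π ⟨i, j⟩ ≫ c j with hDdef
    have hrads : ∀ p : Σ i' : Fin r, Fin (ni i'), IsRad A (σ p ≫ D) := by
      intro p
      obtain ⟨a, b⟩ := p
      by_cases hpi : a = i
      · subst hpi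
        have hzero : σ ⟨a, b⟩ ≫ D = 0 := by
          rw [hDdef, Preadditive.comp_sub, hproj c b, hcdef]
          exact sub_self _
        rw [hzero]
        exact my_isRad_zero
      · refine my_isRad_of_not_isIso (hXi a) (hXi i) _ ?_
        intro hiso
        exact hpair a i hpi ⟨@asIso _ _ _ _ _ hiso⟩
    have hud : u ≫ D = f - ∑ j, uc i j ≫ c j := by
      rw [hDdef, Preadditive.comp_sub, hg, Preadditive.comp_sum]
      congr 1
      refine Finset.sum_congr rfl fun j _ => ?_
      rw [← Category.assoc, huσ ⟨i, j⟩]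
    show ∃ (m : ℕ) (Z : Fin m → ModuleCat.{v} A) (hh : ∀ t, X ⟶ Z t) (gg : ∀ t, Z t ⟶ Xi i),
      (∀ t, IsRad A (hh t)) ∧ (∀ t, IsRadPow A 1 (gg t)) ∧
      (f - ∑ j, uc i j ≫ c j) = ∑ t, hh t ≫ gg t
    set eqv := (Fintype.equivFin (Σ i' : Fin r, Fin (ni i'))).symm with heqv
    refine ⟨Fintype.card (Σ i' : Fin r, Fin (ni i')), fun t => Xi (eqv t).1,
      fun t => uc (eqv t).1 (eqv t).2, fun t => σ (eqv t) ≫ D,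
      fun t => hucrad _ _, fun t => my_isRadPow_one_of_isRad (hrads _), ?_⟩
    rw [← hud, hkey (Xi i) D]
    exact (Equiv.sum_comp eqv (fun p => uc p.1 p.2 ≫ (σ p ≫ D))).symm
  · -- independence
    intro c hcrad j₀ hj₀iso
    haveI := hj₀iso
    have hcrad' : ∃ (m : ℕ) (Z : Fin m → ModuleCat.{v} A) (hh : ∀ t, X ⟶ Z t)
        (gg : ∀ t, Z t ⟶ Xi i),
        (∀ t, IsRad A (hh t)) ∧ (∀ t, IsRadPow A 1 (gg t)) ∧
        (∑ j, uc i j ≫ c j) = ∑ t, hh t ≫ gg t := hcrad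
    obtain ⟨m, Z, hh, gg, hrad, hpow, hsum⟩ := hcrad'
    choose w hw using fun t => hu.2.1 (Z t) (hh t) (hnoret (Z t) (hh t) (hrad t))
    set W : Y ⟶ Xi i := ∑ j, π ⟨i, j⟩ ≫ c j with hWdef
    set ww : Y ⟶ Xi i := ∑ t, w t ≫ gg t with hwwdef
    have huW : u ≫ W = ∑ j, uc i j ≫ c j := by
      rw [hWdef, Preadditive.comp_sum]
      refine Finset.sum_congr rfl fun j _ => ?_
      rw [← Category.assoc, huσ ⟨i, j⟩]
    have huww : u ≫ ww = ∑ j, uc i j ≫ c j := by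
      rw [hwwdef, Preadditive.comp_sum, hsum]
      refine Finset.sum_congr rfl fun t _ => ?_
      rw [← Category.assoc, hw t]
    set p₀ : Σ i' : Fin r, Fin (ni i') := ⟨i, j₀⟩ with hp₀
    set E : Y ⟶ Y := (W - ww) ≫ (inv (c j₀) ≫ σ p₀) with hEdef
    set h₁ : Y ⟶ Y := 𝟙 Y - E with h₁def
    have hE : u ≫ E = 0 := by
      rw [hEdef, ← Category.assoc, Preadditive.comp_sub, huW, huww, sub_self,
        Limits.zero_comp]
    have hu₁ : u ≫ h₁ = u := by
      rw [h₁def, Preadditive.comp_sub, Category.comp_id, hE, sub_zero]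
    have hiso₁ : IsIso h₁ := hu.2.2 h₁ hu₁
    have hEπ : ∀ q, q ≠ p₀ → E ≫ π q = 0 := by
      intro q hq
      rw [hEdef, Category.assoc, Category.assoc, hσπ_ne p₀ q (fun hh' => hq hh'.symm)]
      simp
    have hh₁π : ∀ q, q ≠ p₀ → h₁ ≫ π q = π q := by
      intro q hq
      rw [h₁def, Preadditive.sub_comp, Category.id_comp, hEπ q hq, sub_zero]
    have h4 : (𝟙 (Xi i) : Xi i ⟶ Xi i) =
        (σ p₀ ≫ h₁ ≫ π p₀) ≫ (σ p₀ ≫ inv h₁ ≫ π p₀) := by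
      have h3 : (𝟙 (Xi i) : Xi i ⟶ Xi i) =
          ∑ q, (σ p₀ ≫ h₁ ≫ π q) ≫ (σ q ≫ inv h₁ ≫ π p₀) :=
        calc (𝟙 (Xi i) : Xi i ⟶ Xi i) = σ p₀ ≫ π p₀ := (hσπ_same p₀).symm
          _ = σ p₀ ≫ (h₁ ≫ inv h₁) ≫ π p₀ := by rw [IsIso.hom_inv_id, Category.id_comp]
          _ = σ p₀ ≫ (h₁ ≫ (∑ q, π q ≫ σ q) ≫ inv h₁) ≫ π p₀ := by
              rw [hid', Category.id_comp]
          _ = ∑ q, (σ p₀ ≫ h₁ ≫ π q) ≫ (σ q ≫ inv h₁ ≫ π p₀) := by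
              simp only [Preadditive.sum_comp, Preadditive.comp_sum, Category.assoc]
      rw [h3, Finset.sum_eq_single p₀]
      · intro q _ hq
        rw [hh₁π q hq, hσπ_ne p₀ q (fun hh' => hq hh'.symm), Limits.zero_comp]
      · intro habs
        exact absurd (Finset.mem_univ p₀) habs
    set d : Xi i ⟶ Xi i := σ p₀ ≫ h₁ ≫ π p₀ with hddef
    set d' : Xi i ⟶ Xi i := σ p₀ ≫ inv h₁ ≫ π p₀ with hd'def
    have hdiso : IsIso d := by
      have he : (d' ≫ d) ≫ (d' ≫ d) = d' ≫ d := by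
        rw [Category.assoc, ← Category.assoc d d' d, ← h4, Category.id_comp]
      rcases (hXi i).2 (d' ≫ d) he with h0 | hI
      · exfalso
        apply my_id_ne_zero (hXi i).1
        calc (𝟙 (Xi i) : Xi i ⟶ Xi i) = (d ≫ d') ≫ (d ≫ d') := by
              rw [← h4, Category.id_comp]
          _ = d ≫ (d' ≫ d) ≫ d' := by simp only [Category.assoc]
          _ = 0 := by rw [h0, Limits.zero_comp, Limits.comp_zero]
      · exact ⟨d', h4.symm, hI⟩
    set w₀ : Xi i ⟶ Xi i := σ p₀ ≫ ww with hw₀def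
    have hdW : d = w₀ ≫ inv (c j₀) := by
      have hEp₀ : E ≫ π p₀ = (W - ww) ≫ inv (c j₀) := by
        rw [hEdef, Category.assoc, Category.assoc, hσπ_same p₀, Category.comp_id]
      rw [hddef, h₁def, Preadditive.sub_comp, Category.id_comp, Preadditive.comp_sub,
        hEp₀]
      rw [← Category.assoc, Preadditive.comp_sub]
      have hσW : σ p₀ ≫ W = c j₀ := hproj c j₀
      rw [hσW, ← hw₀def, Preadditive.sub_comp, IsIso.hom_inv_id, hσπ_same p₀]
      exact sub_sub_cancel _ _
    have hw₀iso : IsIso w₀ := by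
      have hw0 : w₀ = d ≫ c j₀ := by
        rw [hdW, Category.assoc, IsIso.inv_hom_id, Category.comp_id]
      rw [hw0]
      infer_instance
    have hterm : ∀ t, ¬ IsIso ((σ p₀ ≫ w t) ≫ gg t) := by
      intro t
      have hpow' : ∃ (m' : ℕ) (Z' : Fin m' → ModuleCat.{v} A) (h' : ∀ s, Z t ⟶ Z' s)
          (g'' : ∀ s, Z' s ⟶ Xi i),
          (∀ s, IsRad A (h' s)) ∧ (∀ s, IsRadPow A 0 (g'' s)) ∧ gg t = ∑ s, h' s ≫ g'' s :=
        hpow t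
      obtain ⟨m', Z', h', g'', hrad', _, hggt⟩ := hpow'
      have hexp : (σ p₀ ≫ w t) ≫ gg t = ∑ s, (σ p₀ ≫ w t) ≫ h' s ≫ g'' s := by
        rw [hggt, Preadditive.comp_sum]
      rw [hexp]
      refine my_not_isIso_sum k A (hXifg i) (hXi i) Finset.univ _ (fun s _ => ?_)
      exact hrad' s (Xi i) (hXifg i) (hXi i) (σ p₀ ≫ w t) (g'' s)
    have hw₀sum : w₀ = ∑ t, (σ p₀ ≫ w t) ≫ gg t := by
      rw [hw₀def, hwwdef, Preadditive.comp_sum]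
      refine Finset.sum_congr rfl fun t _ => ?_
      rw [← Category.assoc]
    refine my_not_isIso_sum k A (hXifg i) (hXi i) Finset.univ _ (fun t _ => hterm t) ?_
    rw [← hw₀sum]
    exact hw₀iso
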